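/- If the associated graded algebra gr(A) is finitely generated as a k-algebra, then A is finitely generated as a k-algebra. -/

import Mathlib

noncomputable def gpAux {k S A : Type*} [Field k] [AddCommMonoid S] [Ring A] [Algebra k A]
    (π : S → (A →ₗ[k] A)) (d : A → S) : List A → A × S
  | [] => (1, 0)
  | x :: l => (π (d x + (gpAux π d l).2) (x * (gpAux π d l).1), d x + (gpAux π d l).2)

/-- Let `k` be a field, `(S,+,0)` an ordered commutative monoid whose order is
compatible with addition (both for `≤` and `<`), directed, and well-founded.  Let `A` be a
`k`-algebra with an internal direct sum decomposition `A = ⊕_{s ∈ S} X s` such that `1 ∈ X 0` and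
`X r · X s ⊆ ⊕_{t ≤ r+s} X t`, with projections `π t` onto the components.  Let `B` be the
associated graded algebra: a `k`-algebra together with a `k`-linear equivalence `e : A ≃ B`
satisfying `e 1 = 1` and `e x * e y = e (π (r+s) (x*y))` for `x ∈ X r`, `y ∈ X s`.
If `B` is finitely generated as a `k`-algebra, then so is `A`. -/
theorem gr_finiteType_implies_finiteType
    {k : Type*} [Field k]
    {S : Type*} [AddCommMonoid S] [PartialOrder S] [DecidableEq S]
    (hmono : ∀ r r' s s' : S, r ≤ r' → s ≤ s' → r + s ≤ r' + s')
    (hstrict : ∀ r s t : S, r < s → r + t < s + t)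
    (hdir : ∀ r s : S, ∃ m : S, r ≤ m ∧ s ≤ m)
    (hwf : WellFounded ((· < ·) : S → S → Prop))
    {A : Type*} [Ring A] [Algebra k A]
    (X : S → Submodule k A)
    (hinternal : DirectSum.IsInternal X)
    (hone : (1 : A) ∈ X 0)
    (hmulX : ∀ r s : S, ∀ a ∈ X r, ∀ b ∈ X s,
      a * b ∈ ⨆ (t : S) (_ : t ≤ r + s), X t)
    (π : S → (A →ₗ[k] A))
    (hπ_mem : ∀ (t : S) (a : A), π t a ∈ X t)
    (hπ_id : ∀ t : S, ∀ x ∈ X t, π t x = x)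
    (hπ_ne : ∀ s t : S, s ≠ t → ∀ x ∈ X s, π t x = 0)
    {B : Type*} [Ring B] [Algebra k B]
    (e : A ≃ₗ[k] B)
    (he_one : e 1 = 1)
    (he_mul : ∀ r s : S, ∀ x ∈ X r, ∀ y ∈ X s,
      e x * e y = e (π (r + s) (x * y)))
    (hB : Algebra.FiniteType k B) :
    Algebra.FiniteType k A := by
  classical
  obtain ⟨T, hT⟩ := hB.out
  -- degree function
  set d : A → S := fun x => if h : ∃ t, x ∈ X t then h.choose else 0 with hd_def
  have hd : ∀ x : A, (∃ t, x ∈ X t) → x ∈ X (d x) := by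
    intro x h
    simp only [hd_def, dif_pos h]
    exact h.choose_spec
  -- decomposition into finitely many homogeneous components
  have hdec : ∀ a : A, ∃ F : Finset S, (∀ t ∉ F, π t a = 0) ∧ a = ∑ t ∈ F, π t a := by
    intro a
    have ha : a ∈ ⨆ t, X t := by rw [hinternal.submodule_iSup_eq_top]; trivial
    refine Submodule.iSup_induction X
      (motive := fun a => ∃ F : Finset S, (∀ t ∉ F, π t a = 0) ∧ a = ∑ t ∈ F, π t a) ha ?_ ?_ ?_
    · intro t x hx
      refine ⟨{t}, ?_, ?_⟩
      · intro u hu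
        exact hπ_ne t u (fun h => hu (by simp [h])) x hx
      · simp [hπ_id t x hx]
    · exact ⟨∅, by simp, by simp⟩
    · rintro x y ⟨F, hF0, hF⟩ ⟨F', hF'0, hF'⟩
      refine ⟨F ∪ F', ?_, ?_⟩
      · intro t ht
        simp [map_add, hF0 t (fun h => ht (Finset.mem_union_left _ h)),
          hF'0 t (fun h => ht (Finset.mem_union_right _ h))]
      · simp only [map_add, Finset.sum_add_distrib]
        rw [← Finset.sum_subset Finset.subset_union_left (fun t _ h => hF0 t h),
            ← Finset.sum_subset Finset.subset_union_right (fun t _ h => hF'0 t h), ← hF, ← hF']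
  -- the submodule of "lower order" terms
  set Mlow : S → Submodule k A := fun s => ⨆ t, ⨆ _ : t < s, X t with hMlow_def
  have hMlow_mem : ∀ s t : S, t < s → X t ≤ Mlow s := by
    intro s t h
    exact le_iSup_of_le t (le_iSup_of_le h le_rfl)
  have hproj : ∀ (s : S) (a : A), a ∈ (⨆ t, ⨆ _ : t ≤ s, X t) → a - π s a ∈ Mlow s := by
    intro s a ha
    refine Submodule.iSup_induction (fun t => ⨆ _ : t ≤ s, X t)
      (motive := fun a => a - π s a ∈ Mlow s) ha ?_ ?_ ?_
    · intro t x hx0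
      have hx : x ∈ (⨆ _ : t ≤ s, X t : Submodule k A) := hx0
      by_cases h : t ≤ s
      · rw [iSup_pos h] at hx
        rcases eq_or_lt_of_le h with rfl | hlt
        · rw [hπ_id t x hx]; simp
        · rw [hπ_ne t s hlt.ne x hx, sub_zero]
          exact hMlow_mem s t hlt hx
      · rw [iSup_neg h] at hx
        simp only [Submodule.mem_bot] at hx
        simp [hx]
    · simp
    · intro x y hx hy
      have : x + y - π s (x + y) = (x - π s x) + (y - π s y) := by
        rw [map_add]; abel
      rw [this]; exact add_mem hx hy
  have hmulLow : ∀ (r c : S) (x : A), x ∈ X r → ∀ a ∈ Mlow c, x * a ∈ Mlow (r + c) := by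
    intro r c x hx a ha
    refine Submodule.iSup_induction (fun t => ⨆ _ : t < c, X t)
      (motive := fun a => x * a ∈ Mlow (r + c)) ha ?_ ?_ ?_
    · intro t v hv0
      have hv : v ∈ (⨆ _ : t < c, X t : Submodule k A) := hv0
      by_cases h : t < c
      · rw [iSup_pos h] at hv
        have h1 : x * v ∈ ⨆ t', ⨆ _ : t' ≤ r + t, X t' := hmulX r t x hx v hv
        have h2 : (⨆ t', ⨆ _ : t' ≤ r + t, X t') ≤ Mlow (r + c) := by
          refine iSup_le fun t' => iSup_le fun ht' => hMlow_mem _ t' ?_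
          have hlt : r + t < r + c := by
            have := hstrict t c r h
            simpa [add_comm] using this
          exact lt_of_le_of_lt ht' hlt
        exact h2 h1
      · rw [iSup_neg h] at hv
        simp only [Submodule.mem_bot] at hv
        simp [hv]
    · simp
    · intro a b ha hb
      rw [mul_add]; exact add_mem ha hb
  -- the finite set of homogeneous generators
  set G : Finset A :=
    T.biUnion (fun b => ((hdec (e.symm b)).choose).image (fun t => π t (e.symm b))) with hG_def
  have hG_hom : ∀ x ∈ G, ∃ t, x ∈ X t := by
    intro x hx
    rw [hG_def, Finset.mem_biUnion] at hx
    obtain ⟨b, _, hx⟩ := hx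
    rw [Finset.mem_image] at hx
    obtain ⟨t, _, rfl⟩ := hx
    exact ⟨t, hπ_mem t _⟩
  have hGen : Algebra.adjoin k (⇑e '' ↑G) = ⊤ := by
    rw [← top_le_iff, ← hT]
    apply Algebra.adjoin_le
    intro b hb
    obtain ⟨h0, hsum⟩ := (hdec (e.symm b)).choose_spec
    have hb' : b = e (∑ t ∈ (hdec (e.symm b)).choose, π t (e.symm b)) := by
      rw [← hsum]
      exact (e.apply_symm_apply b).symm
    rw [hb', map_sum]
    refine Subalgebra.sum_mem _ (fun t ht => Algebra.subset_adjoin ?_)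
    exact ⟨π t (e.symm b), by
      rw [hG_def]
      exact_mod_cast Finset.mem_biUnion.2 ⟨b, hb, Finset.mem_image.2 ⟨t, ht, rfl⟩⟩, rfl⟩
  -- graded monomials
  have hgp_mem : ∀ L : List A, (gpAux π d L).1 ∈ X (gpAux π d L).2 := by
    intro L
    cases L with
    | nil => simpa [gpAux] using hone
    | cons x l => exact hπ_mem _ _
  have hlist : ∀ l : List B, (∀ y ∈ l, y ∈ ⇑e '' ↑G) →
      ∃ L : List A, (∀ y ∈ L, y ∈ G) ∧ l.prod = e (gpAux π d L).1 := by
    intro l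
    induction l with
    | nil => exact fun _ => ⟨[], by simp, by simp [gpAux, he_one]⟩
    | cons b l ih =>
      intro h
      obtain ⟨L, hL, hLe⟩ := ih (fun y hy => h y (List.mem_cons_of_mem _ hy))
      obtain ⟨x, hxG, rfl⟩ := h b (List.mem_cons_self)
      refine ⟨x :: L, ?_, ?_⟩
      · intro y hy
        rcases List.mem_cons.1 hy with rfl | hy
        · exact hxG
        · exact hL y hy
      · have hx : x ∈ X (d x) := hd x (hG_hom x hxG)
        rw [List.prod_cons, hLe, he_mul (d x) _ x hx _ (hgp_mem L)]
        rfl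
  set GP : Set A := {a | ∃ L : List A, (∀ y ∈ L, y ∈ G) ∧ a = (gpAux π d L).1} with hGP_def
  have hspanGP : ∀ a : A, a ∈ Submodule.span k GP := by
    intro a
    have h1 : e a ∈ Subalgebra.toSubmodule (Algebra.adjoin k (⇑e '' ↑G)) := by
      rw [hGen]; trivial
    rw [Algebra.adjoin_eq_span] at h1
    have h2 : a ∈ Submodule.map (e.symm : B →ₗ[k] A)
        (Submodule.span k ↑(Submonoid.closure (⇑e '' ↑G))) :=
      ⟨e a, h1, e.symm_apply_apply a⟩
    rw [Submodule.map_span] at h2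
    refine Submodule.span_mono ?_ h2
    rintro _ ⟨b, hb, rfl⟩
    obtain ⟨l, hl, hlp⟩ := Submonoid.exists_list_of_mem_closure hb
    obtain ⟨L, hL, hLe⟩ := hlist l hl
    rw [← hlp, hLe]
    show e.symm (e _) ∈ GP
    rw [e.symm_apply_apply]
    exact ⟨L, hL, rfl⟩
  have hdiff : ∀ L : List A, (∀ y ∈ L, y ∈ G) →
      (gpAux π d L).1 - L.prod ∈ Mlow (gpAux π d L).2 := by
    intro L
    induction L with
    | nil => intro _; simp [gpAux]
    | cons x l ih =>
      intro h
      have hx : x ∈ X (d x) := hd x (hG_hom x (h x (List.mem_cons_self)))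
      have hih := ih (fun y hy => h y (List.mem_cons_of_mem _ hy))
      have h1 : x * (gpAux π d l).1 - π (d x + (gpAux π d l).2) (x * (gpAux π d l).1)
          ∈ Mlow (d x + (gpAux π d l).2) :=
        hproj _ _ (hmulX (d x) (gpAux π d l).2 x hx _ (hgp_mem l))
      have h2 : x * ((gpAux π d l).1 - l.prod) ∈ Mlow (d x + (gpAux π d l).2) :=
        hmulLow _ _ x hx _ hih
      have heq : (gpAux π d (x :: l)).1 - (x :: l).prod =
          -(x * (gpAux π d l).1 - π (d x + (gpAux π d l).2) (x * (gpAux π d l).1))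
            + x * ((gpAux π d l).1 - l.prod) := by
        show π (d x + (gpAux π d l).2) (x * (gpAux π d l).1) - (x * l.prod) = _
        rw [mul_sub]; abel
      rw [heq]
      exact add_mem (neg_mem h1) h2
  -- main well-founded induction
  have key : ∀ s : S, ∀ x ∈ X s, x ∈ Algebra.adjoin k (↑G : Set A) := by
    intro s
    refine hwf.induction
      (C := fun s => ∀ x ∈ X s, x ∈ Algebra.adjoin k (↑G : Set A)) s ?_
    intro s ih x hx
    have hlow : Mlow s ≤ Subalgebra.toSubmodule (Algebra.adjoin k (↑G : Set A)) :=
      iSup_le fun t => iSup_le fun ht => fun y hy => ih t ht y hy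
    have h2 : π s x ∈ Submodule.span k (π s '' GP) := by
      rw [← Submodule.map_span]
      exact ⟨x, hspanGP x, rfl⟩
    rw [hπ_id s x hx] at h2
    have hsub : π s '' GP ⊆ ↑(Subalgebra.toSubmodule (Algebra.adjoin k (↑G : Set A))) := by
      rintro _ ⟨a, ⟨L, hL, rfl⟩, rfl⟩
      by_cases hc : (gpAux π d L).2 = s
      · have hmem : (gpAux π d L).1 ∈ X s := hc ▸ hgp_mem L
        rw [hπ_id s _ hmem]
        have hdiffL := hdiff L hL
        rw [hc] at hdiffL
        have hprod : L.prod ∈ Algebra.adjoin k (↑G : Set A) :=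
          list_prod_mem (fun y hy => Algebra.subset_adjoin (hL y hy))
        have := add_mem (hlow hdiffL) hprod
        simpa using this
      · rw [hπ_ne _ s hc _ (hgp_mem L)]
        exact zero_mem _
    exact Submodule.span_le.2 hsub h2
  have htop : Algebra.adjoin k (↑G : Set A) = ⊤ := by
    rw [eq_top_iff]
    intro a _
    obtain ⟨F, _, ha⟩ := hdec a
    rw [ha]
    exact Subalgebra.sum_mem _ (fun t _ => key t _ (hπ_mem t a))
  exact ⟨G, htop⟩
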